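/- arXiv:2510.08262 — 4 statements merged into one kernel-verified Lean document; each statement's English description precedes it below -/
import Mathlib

section
/- Let k ≥ 3, m ≥ 0 and n ≥ k−1 be integers. Then #{Δ ∈ P_k(m,n) : d_1 = d_{k−1} ≥ 2, α_1 = d_1, α_2 = 0, and β_1 = d_1} = #{Δ ∈ P_k(m,n+1) : d_1 ≥ 3, d_i = d_1 − 1 for all 2 ≤ i ≤ k−1, γ^1 = ⋯ = γ^{k−2} = ∅, and α = ∅}. -/
/-- A partition: a finite nonincreasing list of positive integers. -/
structure Partn where
  parts : List ℕ
  sorted : parts.Pairwise (· ≥ ·)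
  pos : ∀ x ∈ parts, 0 < x

namespace Partn

/-- The weight `|λ|` of a partition: the sum of its parts. -/
def wt (p : Partn) : ℕ := p.parts.sum

/-- The length `ℓ(λ)`: the number of parts. -/
def len (p : Partn) : ℕ := p.parts.length

/-- The `j`-th largest part `λ_j` (1-indexed), with `λ_j = 0` for `j > ℓ(λ)`. -/
def part (p : Partn) (j : ℕ) : ℕ := p.parts.getD (j - 1) 0

/-- `f_j(λ)`: the number of parts of `λ` equal to `j`. -/
def freq (p : Partn) (j : ℕ) : ℕ := p.parts.count j

/-- The empty partition. -/
def empty : Partn := ⟨[], List.Pairwise.nil, by simp⟩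

end Partn

/-- The type of `(2k-1)`-tuples `(α, β, γ^1, …, γ^{k-2}, ϖ^1, …, ϖ^{k-1})`. -/
abbrev PTuple (k : ℕ) : Type :=
  Partn × Partn × (Fin (k - 2) → Partn) × (Fin (k - 1) → Partn)

/-- `d_j := ℓ(ϖ^j)` (1-indexed, `0` out of range). -/
def dIdx (k : ℕ) (w : Fin (k - 1) → Partn) (j : ℕ) : ℕ :=
  if h : j - 1 < k - 1 then (w ⟨j - 1, h⟩).len else 0

/-- `γ^j` (1-indexed, the empty partition out of range). -/
def gIdx (k : ℕ) (g : Fin (k - 2) → Partn) (j : ℕ) : Partn :=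
  if h : j - 1 < k - 2 then g ⟨j - 1, h⟩ else Partn.empty

/-- Membership in Garvan-type set `P_k(m, n)` of `(2k-1)`-tuples of partitions. -/
def PkMem (k : ℕ) (m : ℤ) (n : ℕ) (t : PTuple k) : Prop :=
  (∀ i : Fin (k - 1), (t.2.2.2 i).parts =
      List.replicate (t.2.2.2 i).len (t.2.2.2 i).len) ∧
  (∀ j, 1 ≤ j → j + 1 ≤ k - 1 → dIdx k t.2.2.2 (j + 1) ≤ dIdx k t.2.2.2 j) ∧
  1 ≤ dIdx k t.2.2.2 (k - 1) ∧
  (∀ x ∈ t.1.parts, x ≤ dIdx k t.2.2.2 (k - 1)) ∧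
  (∀ x ∈ t.2.1.parts, x ≤ dIdx k t.2.2.2 (k - 1)) ∧
  (t.1.len : ℤ) - (t.2.1.len : ℤ) = m ∧
  (∀ j, 1 ≤ j → j ≤ k - 2 →
      (gIdx k t.2.2.1 j).len ≤ dIdx k t.2.2.2 j - dIdx k t.2.2.2 (j + 1)) ∧
  t.1.wt + t.2.1.wt + (∑ i, (t.2.2.1 i).wt) + (∑ i, (t.2.2.2 i).wt) = n

namespace LemPP7Aux

lemma pext {p q : Partn} (h : p.parts = q.parts) : p = q := by
  cases p; cases q; simp_all

/-- The square partition `(d^d)`. -/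
def sqP (d : ℕ) : Partn :=
  ⟨List.replicate d d, List.pairwise_replicate.2 (Or.inr (le_refl d)),
   fun x hx => by
     rcases List.mem_replicate.1 hx with ⟨hd, rfl⟩; omega⟩

/-- The one-part partition `(v+1)`. -/
def oneP (v : ℕ) : Partn := ⟨[v + 1], List.pairwise_singleton _ _, by simp⟩

@[simp] lemma sqP_parts (d : ℕ) : (sqP d).parts = List.replicate d d := rfl
@[simp] lemma sqP_len (d : ℕ) : (sqP d).len = d := by simp [sqP, Partn.len]
@[simp] lemma sqP_wt (d : ℕ) : (sqP d).wt = d * d := by simp [sqP, Partn.wt]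
@[simp] lemma oneP_parts (v : ℕ) : (oneP v).parts = [v + 1] := rfl
@[simp] lemma oneP_len (v : ℕ) : (oneP v).len = 1 := rfl
@[simp] lemma oneP_wt (v : ℕ) : (oneP v).wt = v + 1 := by simp [oneP, Partn.wt]
@[simp] lemma empty_parts : Partn.empty.parts = [] := rfl
@[simp] lemma empty_len : Partn.empty.len = 0 := rfl
@[simp] lemma empty_wt : Partn.empty.wt = 0 := rfl

lemma dIdx_fin {K : ℕ} (w : Fin (K + 3 - 1) → Partn) (i : Fin (K + 3 - 1)) :
    dIdx (K + 3) w ((i : ℕ) + 1) = (w i).len := dif_pos i.isLt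

lemma gIdx_fin {K : ℕ} (g : Fin (K + 3 - 2) → Partn) (i : Fin (K + 3 - 2)) :
    gIdx (K + 3) g ((i : ℕ) + 1) = g i := dif_pos i.isLt

lemma sumW {K : ℕ} (f : Fin (K + 3 - 1) → ℕ) (x y : ℕ)
    (h0 : ∀ i : Fin (K + 3 - 1), (i : ℕ) = 0 → f i = x)
    (h1 : ∀ i : Fin (K + 3 - 1), (i : ℕ) ≠ 0 → f i = y) :
    (∑ i, f i) = x + (K + 1) * y := by
  rw [show (∑ i, f i) = ∑ i : Fin (K + 1 + 1), f i from rfl, Fin.sum_univ_succ]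
  rw [h0 (0 : Fin (K + 1 + 1)) (by simp), Finset.sum_congr rfl
      (fun i _ => h1 i.succ (by simp [Fin.val_succ])),
    Finset.sum_const, Finset.card_univ, Fintype.card_fin, smul_eq_mul]

/-- The unique element of the left set (with `d = c + 2`). -/
def TL (K c : ℕ) : PTuple (K + 3) :=
  (oneP (c + 1), oneP (c + 1), fun _ => Partn.empty, fun _ => sqP (c + 2))

/-- The unique element of the right set (with `d₁ = c + 3`). -/
def TR (K c : ℕ) : PTuple (K + 3) :=
  (Partn.empty, Partn.empty, fun _ => Partn.empty,
   fun i => if (i : ℕ) = 0 then sqP (c + 3) else sqP (c + 2))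

lemma dmono {N : ℕ} (f : ℕ → ℕ)
    (h : ∀ j, 1 ≤ j → j + 1 ≤ N → f (j + 1) ≤ f j) :
    ∀ a b, 1 ≤ a → a ≤ b → b ≤ N → f b ≤ f a := by
  intro a b ha hab hbN
  induction b with
  | zero => omega
  | succ b ih =>
    rcases Nat.lt_or_ge a (b + 1) with hlt | hge
    · exact le_trans (h b (by omega) (by omega)) (ih (by omega) (by omega))
    · have : a = b + 1 := by omega
      subst this; exact le_refl _

lemma memL {K : ℕ} {m : ℤ} {n : ℕ} (hm : 0 ≤ m) (t : PTuple (K + 3)) :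
    (PkMem (K + 3) m n t ∧
        dIdx (K + 3) t.2.2.2 1 = dIdx (K + 3) t.2.2.2 (K + 3 - 1) ∧
        2 ≤ dIdx (K + 3) t.2.2.2 1 ∧
        t.1.part 1 = dIdx (K + 3) t.2.2.2 1 ∧ t.1.part 2 = 0 ∧
        t.2.1.part 1 = dIdx (K + 3) t.2.2.2 1) ↔
      (m = 0 ∧ ∃ c, (K + 2) * ((c + 2) * (c + 2)) + 2 * (c + 2) = n ∧
        t = TL K c) := by
  constructor
  · rintro ⟨⟨h1, h2, h3, h4, h5, h6, h7, h8⟩, e1, e2, e3, e4, e5⟩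
    obtain ⟨a, b, g, w⟩ := t
    simp only at *
    set d := dIdx (K + 3) w 1 with hd
    have hmono := dmono (N := K + 2) (dIdx (K + 3) w) h2
    have hdall : ∀ j, 1 ≤ j → j ≤ K + 2 → dIdx (K + 3) w j = d := by
      intro j hj1 hj2
      have hu : dIdx (K + 3) w j ≤ d := hmono 1 j (by omega) hj1 hj2
      have hl : dIdx (K + 3) w (K + 2) ≤ dIdx (K + 3) w j :=
        hmono j (K + 2) hj1 hj2 (le_refl _)
      have e1' : d = dIdx (K + 3) w (K + 2) := e1
      omega
    have hlen : ∀ i : Fin (K + 3 - 1), (w i).len = d := by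
      intro i
      rw [← dIdx_fin w i]
      exact hdall ((i : ℕ) + 1) (by omega) (by omega)
    have hw : ∀ i : Fin (K + 3 - 1), w i = sqP d := fun i =>
      pext (by rw [h1 i, hlen i, sqP_parts])
    have hg : ∀ i : Fin (K + 3 - 2), g i = Partn.empty := by
      intro i
      have h7' := h7 ((i : ℕ) + 1) (by omega) (by omega)
      rw [gIdx_fin g i, hdall ((i : ℕ) + 1) (by omega) (by omega),
        hdall ((i : ℕ) + 1 + 1) (by omega) (by omega)] at h7'
      simp only [Nat.sub_self, Nat.le_zero] at h7'
      exact pext (List.length_eq_zero_iff.1 h7')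
    have hd2 : 2 ≤ d := e2
    have ha : a.parts = [d] := by
      rcases hpa : a.parts with _ | ⟨x, _ | ⟨y, l⟩⟩
      · rw [Partn.part, hpa] at e3; simp at e3; omega
      · rw [Partn.part, hpa] at e3; simp at e3; rw [e3]
      · exfalso
        rw [Partn.part, hpa] at e4
        simp at e4
        have := a.pos y (by rw [hpa]; simp)
        omega
    have hla : a.len = 1 := by rw [Partn.len, ha]; rfl
    have hb : b.parts = [d] := by
      have hlb : b.len ≤ 1 := by rw [hla] at h6; omega
      rcases hpb : b.parts with _ | ⟨x, l⟩
      · rw [Partn.part, hpb] at e5; simp at e5; omega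
      · have hl0 : l = [] := by
          have h' : b.len = l.length + 1 := by rw [Partn.len, hpb]; simp
          have : l.length = 0 := by omega
          exact List.length_eq_zero_iff.1 this
        subst hl0
        rw [Partn.part, hpb] at e5
        simp at e5; rw [e5]
    have hm0 : m = 0 := by
      have hlb : b.len = 1 := by rw [Partn.len, hb]; rfl
      rw [hla, hlb] at h6; omega
    have hD : d - 2 + 2 = d := by omega
    refine ⟨hm0, d - 2, ?_, ?_⟩
    · have hwa : a.wt = d := by rw [Partn.wt, ha]; simp
      have hwb : b.wt = d := by rw [Partn.wt, hb]; simp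
      have hwg : (∑ i, (g i).wt) = 0 :=
        Finset.sum_eq_zero (fun i _ => by rw [hg i]; rfl)
      have hww : (∑ i, (w i).wt) = d * d + (K + 1) * (d * d) :=
        sumW _ _ _ (fun i _ => by rw [hw i, sqP_wt])
          (fun i _ => by rw [hw i, sqP_wt])
      rw [hwa, hwb, hwg, hww] at h8
      have hrg : (K + 2) * (d * d) = d * d + (K + 1) * (d * d) := by ring
      rw [hD]; linarith
    · refine Prod.ext ?_ (Prod.ext ?_ (Prod.ext ?_ ?_)) <;> simp only [TL]
      · exact pext (by rw [ha]; simp [hD])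
      · exact pext (by rw [hb]; simp [hD])
      · funext i; exact hg i
      · funext i; rw [hw i, hD]

  · rintro ⟨rfl, c, hc, rfl⟩
    have hdL : ∀ j, 1 ≤ j → j ≤ K + 2 →
        dIdx (K + 3) (TL K c).2.2.2 j = c + 2 := by
      intro j hj1 hj2
      rw [dIdx, dif_pos (show j - 1 < K + 3 - 1 from by omega)]
      simp [TL]
    have EK : dIdx (K + 3) (TL K c).2.2.2 (K + 3 - 1) = c + 2 :=
      hdL (K + 2) (by omega) (le_refl _)
    refine ⟨⟨?_, ?_, ?_, ?_, ?_, ?_, ?_, ?_⟩, ?_, ?_, ?_, ?_, ?_⟩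
    · intro i; simp [TL]
    · intro j hj1 hj2
      rw [hdL j hj1 (by omega), hdL (j + 1) (by omega) (by omega)]
    · rw [EK]; omega
    · intro x hx
      rw [EK]
      simp only [TL, oneP_parts, List.mem_singleton] at hx; omega
    · intro x hx
      rw [EK]
      simp only [TL, oneP_parts, List.mem_singleton] at hx; omega
    · simp [TL]
    · intro j hj1 hj2
      have hge : gIdx (K + 3) (TL K c).2.2.1 j = Partn.empty := by
        rw [gIdx]; split <;> simp [TL]
      rw [hge]; simp
    · have hwg : (∑ i, ((TL K c).2.2.1 i).wt) = 0 :=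
        Finset.sum_eq_zero (fun i _ => rfl)
      have hww : (∑ i, ((TL K c).2.2.2 i).wt)
          = (c + 2) * (c + 2) + (K + 1) * ((c + 2) * (c + 2)) :=
        sumW _ _ _ (fun i _ => sqP_wt _) (fun i _ => sqP_wt _)
      rw [hwg, hww]
      have hrg : (K + 2) * ((c + 2) * (c + 2))
          = (c + 2) * (c + 2) + (K + 1) * ((c + 2) * (c + 2)) := by ring
      show c + 1 + 1 + (c + 1 + 1) + 0
          + ((c + 2) * (c + 2) + (K + 1) * ((c + 2) * (c + 2))) = n
      linarith
    · rw [hdL 1 (by omega) (by omega), EK]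
    · rw [hdL 1 (by omega) (by omega)]; omega
    · rw [hdL 1 (by omega) (by omega)]; rfl
    · rfl
    · rw [hdL 1 (by omega) (by omega)]; rfl

lemma memR {K : ℕ} {m : ℤ} {n : ℕ} (hm : 0 ≤ m) (t : PTuple (K + 3)) :
    (PkMem (K + 3) m (n + 1) t ∧ 3 ≤ dIdx (K + 3) t.2.2.2 1 ∧
        (∀ j, 2 ≤ j → j ≤ K + 3 - 1 →
          dIdx (K + 3) t.2.2.2 j = dIdx (K + 3) t.2.2.2 1 - 1) ∧
        (∀ j, 1 ≤ j → j ≤ K + 3 - 2 → (gIdx (K + 3) t.2.2.1 j).parts = []) ∧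
        t.1.parts = []) ↔
      (m = 0 ∧ ∃ c, (c + 3) * (c + 3) + (K + 1) * ((c + 2) * (c + 2)) = n + 1 ∧
        t = TR K c) := by
  constructor
  · rintro ⟨⟨h1, h2, h3, h4, h5, h6, h7, h8⟩, e1, e2, e3, e4⟩
    obtain ⟨a, b, g, w⟩ := t
    simp only at *
    set e := dIdx (K + 3) w 1 with he
    have hlen : ∀ i : Fin (K + 3 - 1),
        (w i).len = if (i : ℕ) = 0 then e else e - 1 := by
      intro i
      rcases Nat.eq_zero_or_pos (i : ℕ) with h0 | h0
      · rw [if_pos h0, ← dIdx_fin w i, h0]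
      · rw [if_neg (by omega), ← dIdx_fin w i]
        exact e2 ((i : ℕ) + 1) (by omega) (by omega)
    have he3 : 3 ≤ e := e1
    have hw : ∀ i : Fin (K + 3 - 1),
        w i = if (i : ℕ) = 0 then sqP e else sqP (e - 1) := by
      intro i
      apply pext
      rw [h1 i, hlen i]
      split <;> simp
    have hg : ∀ i : Fin (K + 3 - 2), g i = Partn.empty := by
      intro i
      have h := e3 ((i : ℕ) + 1) (by omega) (by omega)
      rw [gIdx_fin g i] at h
      exact pext h
    have ha : a = Partn.empty := pext e4
    have hla : a.len = 0 := by rw [ha]; rfl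
    have hlb : b.len = 0 := by rw [hla] at h6; push_cast at h6; omega
    have hb : b = Partn.empty := pext (List.length_eq_zero_iff.1 hlb)
    have hm0 : m = 0 := by rw [hla, hlb] at h6; simpa using h6.symm
    have h32 : e - 3 + 3 = e := by omega
    have h21 : e - 3 + 2 = e - 1 := by omega
    refine ⟨hm0, e - 3, ?_, ?_⟩
    · have hwg : (∑ i, (g i).wt) = 0 :=
        Finset.sum_eq_zero (fun i _ => by rw [hg i]; rfl)
      have hww : (∑ i, (w i).wt) = e * e + (K + 1) * ((e - 1) * (e - 1)) :=
        sumW _ _ _ (fun i hi => by rw [hw i, if_pos hi, sqP_wt])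
          (fun i hi => by rw [hw i, if_neg hi, sqP_wt])
      rw [ha, hb, hwg, hww] at h8
      simp only [empty_wt] at h8
      rw [h32, h21]; linarith
    · refine Prod.ext ?_ (Prod.ext ?_ (Prod.ext ?_ ?_)) <;> simp only [TR]
      · exact ha
      · exact hb
      · funext i; exact hg i
      · funext i
        rw [hw i, h32, h21]

  · rintro ⟨rfl, c, hc, rfl⟩
    have hdR : ∀ j, 1 ≤ j → j ≤ K + 2 → dIdx (K + 3) (TR K c).2.2.2 j
        = if j = 1 then c + 3 else c + 2 := by
      intro j hj1 hj2
      rw [dIdx, dif_pos (show j - 1 < K + 3 - 1 from by omega)]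
      simp only [TR]
      rcases Nat.eq_or_lt_of_le hj1 with h1 | h1
      · rw [if_pos (show j - 1 = 0 from by omega), if_pos h1.symm]; simp
      · rw [if_neg (show ¬ j - 1 = 0 from by omega), if_neg (by omega)]; simp
    have EK : dIdx (K + 3) (TR K c).2.2.2 (K + 3 - 1) = c + 2 := by
      have h := hdR (K + 2) (by omega) (le_refl _)
      rw [if_neg (by omega)] at h
      exact h
    have E1 : dIdx (K + 3) (TR K c).2.2.2 1 = c + 3 := by
      rw [hdR 1 (by omega) (by omega), if_pos rfl]
    refine ⟨⟨?_, ?_, ?_, ?_, ?_, ?_, ?_, ?_⟩, ?_, ?_, ?_, ?_⟩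
    · intro i; simp only [TR]; split <;> simp
    · intro j hj1 hj2
      rw [hdR j hj1 (by omega), hdR (j + 1) (by omega) (by omega)]
      split <;> split <;> omega
    · rw [EK]; omega
    · intro x hx; simp [TR] at hx
    · intro x hx; simp [TR] at hx
    · simp [TR]
    · intro j hj1 hj2
      have hge : gIdx (K + 3) (TR K c).2.2.1 j = Partn.empty := by
        rw [gIdx]; split <;> simp [TR]
      rw [hge]; simp
    · have hwg : (∑ i, ((TR K c).2.2.1 i).wt) = 0 :=
        Finset.sum_eq_zero (fun i _ => rfl)
      have hww : (∑ i, ((TR K c).2.2.2 i).wt)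
          = (c + 3) * (c + 3) + (K + 1) * ((c + 2) * (c + 2)) :=
        sumW (fun i => ((TR K c).2.2.2 i).wt) _ _
          (fun i hi => by
            show (if (i : ℕ) = 0 then sqP (c + 3) else sqP (c + 2)).wt = _
            rw [if_pos hi, sqP_wt])
          (fun i hi => by
            show (if (i : ℕ) = 0 then sqP (c + 3) else sqP (c + 2)).wt = _
            rw [if_neg hi, sqP_wt])
      rw [hwg, hww]
      show 0 + 0 + 0 + ((c + 3) * (c + 3) + (K + 1) * ((c + 2) * (c + 2))) = n + 1
      linarith
    · rw [E1]; omega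
    · intro j hj1 hj2
      rw [hdR j (by omega) hj2, if_neg (by omega), E1]
      omega
    · intro j hj1 hj2
      have hge : gIdx (K + 3) (TR K c).2.2.1 j = Partn.empty := by
        rw [gIdx]; split <;> simp [TR]
      rw [hge]; rfl
    · rfl

lemma inj2 {K a b : ℕ}
    (h : (K + 2) * ((a + 2) * (a + 2)) + 2 * (a + 2)
       = (K + 2) * ((b + 2) * (b + 2)) + 2 * (b + 2)) : a = b := by
  rcases lt_trichotomy a b with h1 | h1 | h1
  · exfalso
    have h2 : (a + 2) * (a + 2) < (b + 2) * (b + 2) :=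
      Nat.mul_lt_mul_of_lt_of_le (by omega) (by omega) (by omega)
    nlinarith
  · exact h1
  · exfalso
    have h2 : (b + 2) * (b + 2) < (a + 2) * (a + 2) :=
      Nat.mul_lt_mul_of_lt_of_le (by omega) (by omega) (by omega)
    nlinarith

lemma ncard_eq_of {X Y : Type*} {S : Set X} {T : Set Y}
    (hS : S.Subsingleton) (hT : T.Subsingleton)
    (h : S.Nonempty ↔ T.Nonempty) : S.ncard = T.ncard := by
  by_cases hs : S.Nonempty
  · obtain ⟨b, rfl⟩ := hT.eq_empty_or_singleton.resolve_left
      (by rintro rfl; simpa using h.1 hs)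
    obtain ⟨a, rfl⟩ := hS.eq_empty_or_singleton.resolve_left
      (by rintro rfl; simp at hs)
    simp
  · rw [Set.not_nonempty_iff_eq_empty.1 hs,
      Set.not_nonempty_iff_eq_empty.1 (fun ht => hs (h.2 ht))]
    simp

lemma keyid (K x : ℕ) : (x + 3) * (x + 3) + (K + 1) * ((x + 2) * (x + 2))
    = (K + 2) * ((x + 2) * (x + 2)) + 2 * (x + 2) + 1 := by ring

end LemPP7Aux

open LemPP7Aux in
/-- Lemma 5.10 (restated). -/
theorem lem_pp7 (k : ℕ) (m : ℤ) (n : ℕ) (hk : 3 ≤ k) (hm : 0 ≤ m)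
    (hn : k - 1 ≤ n) :
    {t : PTuple k | PkMem k m n t ∧
        dIdx k t.2.2.2 1 = dIdx k t.2.2.2 (k - 1) ∧ 2 ≤ dIdx k t.2.2.2 1 ∧
        t.1.part 1 = dIdx k t.2.2.2 1 ∧ t.1.part 2 = 0 ∧
        t.2.1.part 1 = dIdx k t.2.2.2 1}.ncard =
      {t : PTuple k | PkMem k m (n + 1) t ∧ 3 ≤ dIdx k t.2.2.2 1 ∧
        (∀ j, 2 ≤ j → j ≤ k - 1 → dIdx k t.2.2.2 j = dIdx k t.2.2.2 1 - 1) ∧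
        (∀ j, 1 ≤ j → j ≤ k - 2 → (gIdx k t.2.2.1 j).parts = []) ∧
        t.1.parts = []}.ncard := by
  obtain ⟨K, rfl⟩ : ∃ K, k = K + 3 := ⟨k - 3, by omega⟩
  have hSL : {t : PTuple (K + 3) | PkMem (K + 3) m n t ∧
        dIdx (K + 3) t.2.2.2 1 = dIdx (K + 3) t.2.2.2 (K + 3 - 1) ∧
        2 ≤ dIdx (K + 3) t.2.2.2 1 ∧
        t.1.part 1 = dIdx (K + 3) t.2.2.2 1 ∧ t.1.part 2 = 0 ∧
        t.2.1.part 1 = dIdx (K + 3) t.2.2.2 1}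
      = {t : PTuple (K + 3) | m = 0 ∧
          ∃ c, (K + 2) * ((c + 2) * (c + 2)) + 2 * (c + 2) = n ∧ t = TL K c} :=
    Set.ext fun t => memL hm t
  have hSR : {t : PTuple (K + 3) | PkMem (K + 3) m (n + 1) t ∧
        3 ≤ dIdx (K + 3) t.2.2.2 1 ∧
        (∀ j, 2 ≤ j → j ≤ K + 3 - 1 →
          dIdx (K + 3) t.2.2.2 j = dIdx (K + 3) t.2.2.2 1 - 1) ∧
        (∀ j, 1 ≤ j → j ≤ K + 3 - 2 → (gIdx (K + 3) t.2.2.1 j).parts = []) ∧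
        t.1.parts = []}
      = {t : PTuple (K + 3) | m = 0 ∧
          ∃ c, (c + 3) * (c + 3) + (K + 1) * ((c + 2) * (c + 2)) = n + 1 ∧
            t = TR K c} :=
    Set.ext fun t => memR hm t
  rw [hSL, hSR]
  apply ncard_eq_of
  · rintro t ⟨-, c, hc, rfl⟩ t' ⟨-, c', hc', rfl⟩
    rw [inj2 (hc.trans hc'.symm)]
  · rintro t ⟨-, c, hc, rfl⟩ t' ⟨-, c', hc', rfl⟩
    have hcc : c = c' := by
      apply inj2 (K := K)
      rw [keyid K c] at hc; rw [keyid K c'] at hc'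
      omega
    rw [hcc]
  · constructor
    · rintro ⟨t, hm0, c, hc, -⟩
      exact ⟨TR K c, hm0, c, by rw [keyid K c]; omega, rfl⟩
    · rintro ⟨t, hm0, c, hc, -⟩
      refine ⟨TL K c, hm0, c, ?_, rfl⟩
      rw [keyid K c] at hc; omega
end

section
/- Let k ≥ 3, m ≥ 0 and n ≥ k−1 be integers. Then #{Δ ∈ P_k(m,n) : d_1 = d_{k−1} ≥ 2, α_1 = d_1 > α_2 ≥ 1, and α_1 − α_2 is odd} ≤ #{Δ ∈ P_k(m,n+1) : d_1 = d_{k−1} ≥ 2, 1 ≤ α_1 = α_2 < d_1, d_1 − α_1 is odd, and f_1(β) ≥ (d_1 − α_1 + 1)/2}. -/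
theorem Partn.ext' {p q : Partn} (h : p.parts = q.parts) : p = q := by
  cases p; cases q; cases h; rfl

noncomputable def mkPartn (l : List ℕ) : Partn :=
  if h : l.Pairwise (· ≥ ·) ∧ ∀ x ∈ l, 0 < x then ⟨l, h.1, h.2⟩ else Partn.empty

theorem mkPartn_parts {l : List ℕ} (h1 : l.Pairwise (· ≥ ·)) (h2 : ∀ x ∈ l, 0 < x) :
    (mkPartn l).parts = l := by rw [mkPartn, dif_pos ⟨h1, h2⟩]

theorem repl_sorted (s x : ℕ) : (List.replicate s x).Pairwise (· ≥ ·) := by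
  induction s with
  | zero => simp
  | succ n ih =>
      rw [List.replicate_succ]
      exact List.pairwise_cons.mpr ⟨fun b hb => by simp_all [List.eq_of_mem_replicate hb], ih⟩

theorem partn_wt_finite (N : ℕ) : {p : Partn | p.wt ≤ N}.Finite := by
  have h1 : Set.InjOn (fun p : Partn => p.parts.map
      (fun x => (⟨min x N, by omega⟩ : Fin (N+1)))) {p : Partn | p.wt ≤ N} := by
    intro p hp q hq h
    have key : ∀ r : Partn, r ∈ {p : Partn | p.wt ≤ N} →
        (r.parts.map (fun x => (⟨min x N, by omega⟩ : Fin (N+1)))).map Fin.val = r.parts := by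
      intro r hr
      rw [List.map_map]
      have : ∀ x ∈ r.parts, x ≤ N := fun x hx =>
        le_trans (List.le_sum_of_mem hx) hr
      calc r.parts.map _ = r.parts.map id := List.map_congr_left (fun x hx => by
              simp [min_eq_left (this x hx)])
        _ = r.parts := List.map_id _
    exact Partn.ext' (by rw [← key p hp, ← key q hq]; exact congrArg _ h)
  apply Set.Finite.of_finite_image ?_ h1
  apply Set.Finite.subset (List.finite_length_le (Fin (N+1)) N)
  rintro l ⟨p, hp, rfl⟩
  simp only [Set.mem_setOf_eq, List.length_map]
  exact le_trans (List.length_le_sum_of_one_le _ fun i hi => p.pos i hi) hp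

theorem tuple_finite (k N : ℕ) :
    {t : PTuple k | t.1.wt ≤ N ∧ t.2.1.wt ≤ N ∧ (∀ i, (t.2.2.1 i).wt ≤ N) ∧
      (∀ i, (t.2.2.2 i).wt ≤ N)}.Finite := by
  have hS := partn_wt_finite N
  have hpi1 : (Set.univ.pi fun _ : Fin (k-2) => {p : Partn | p.wt ≤ N}).Finite :=
    Set.Finite.pi fun _ => hS
  have hpi2 : (Set.univ.pi fun _ : Fin (k-1) => {p : Partn | p.wt ≤ N}).Finite :=
    Set.Finite.pi fun _ => hS
  apply (hS.prod (hS.prod (hpi1.prod hpi2))).subset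
  rintro ⟨a, b, g, w⟩ ⟨h1, h2, h3, h4⟩
  refine ⟨h1, h2, ?_, ?_⟩ <;> simp only [Set.mem_pi, Set.mem_univ, forall_true_left] <;>
    intro i <;> [exact h3 i; exact h4 i]

theorem pk_finite (k : ℕ) (m : ℤ) (n : ℕ) (P : PTuple k → Prop) :
    {t : PTuple k | PkMem k m n t ∧ P t}.Finite := by
  apply (tuple_finite k n).subset
  rintro ⟨a, b, g, w⟩ ⟨hmem, -⟩
  have hwt : a.wt + b.wt + (∑ i, (g i).wt) + (∑ i, (w i).wt) = n := hmem.2.2.2.2.2.2.2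
  simp only [Set.mem_setOf_eq]
  have hg : ∀ i, (g i).wt ≤ ∑ j, (g j).wt := fun i =>
    Finset.single_le_sum (f := fun j => (g j).wt) (fun _ _ => Nat.zero_le _) (Finset.mem_univ i)
  have hw : ∀ i, (w i).wt ≤ ∑ j, (w j).wt := fun i =>
    Finset.single_le_sum (f := fun j => (w j).wt) (fun _ _ => Nat.zero_le _) (Finset.mem_univ i)
  exact ⟨by omega, by omega, fun i => by have := hg i; omega, fun i => by have := hw i; omega⟩

noncomputable def Fmap (k : ℕ) (t : PTuple k) : PTuple k :=
  (mkPartn (t.1.part 2 :: t.1.parts.tail ++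
      List.replicate ((dIdx k t.2.2.2 1 - t.1.part 2 + 1) / 2) 1),
   mkPartn (t.2.1.parts ++ List.replicate ((dIdx k t.2.2.2 1 - t.1.part 2 + 1) / 2) 1),
   t.2.2.1, t.2.2.2)

theorem Fmap_parts {k : ℕ} (al be : Partn) (g : Fin (k-2) → Partn) (w : Fin (k-1) → Partn)
    (h3 : al.part 1 = dIdx k w 1) (h5 : 1 ≤ al.part 2) :
    ∃ rest, al.parts = dIdx k w 1 :: al.part 2 :: rest ∧
      (∀ x ∈ rest, x ∈ al.parts) ∧
      (Fmap k (al, be, g, w)).1.parts =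
        al.part 2 :: al.part 2 :: rest ++
          List.replicate ((dIdx k w 1 - al.part 2 + 1) / 2) 1 ∧
      (Fmap k (al, be, g, w)).2.1.parts =
        be.parts ++ List.replicate ((dIdx k w 1 - al.part 2 + 1) / 2) 1 := by
  obtain ⟨rest, hal⟩ : ∃ rest, al.parts = dIdx k w 1 :: al.part 2 :: rest := by
    rcases hps : al.parts with _ | ⟨x, _ | ⟨y, rest⟩⟩
    · simp [Partn.part, hps] at h5
    · simp [Partn.part, hps] at h5
    · refine ⟨rest, ?_⟩
      have hx : al.part 1 = x := by simp [Partn.part, hps]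
      have hy : al.part 2 = y := by simp [Partn.part, hps]
      rw [hy, ← h3, hx]
  have hmemrest : ∀ x ∈ rest, x ∈ al.parts := fun x hx => by
    rw [hal]; exact List.mem_cons_of_mem _ (List.mem_cons_of_mem _ hx)
  have hsort : (dIdx k w 1 :: al.part 2 :: rest).Pairwise (· ≥ ·) := hal ▸ al.sorted
  have hpos : ∀ x ∈ dIdx k w 1 :: al.part 2 :: rest, 0 < x := fun x hx => al.pos x (hal ▸ hx)
  obtain ⟨hdge, htail⟩ := List.pairwise_cons.mp hsort
  obtain ⟨hage, hrest⟩ := List.pairwise_cons.mp htail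
  have hmain : (al.part 2 :: al.part 2 :: rest).Pairwise (· ≥ ·) :=
    List.pairwise_cons.mpr ⟨fun b hb => by
      rcases List.mem_cons.mp hb with rfl | hb
      · exact le_refl _
      · exact hage b hb, htail⟩
  have hmainpos : ∀ x ∈ al.part 2 :: al.part 2 :: rest, 0 < x := fun x hx => by
    rcases List.mem_cons.mp hx with rfl | hx
    · omega
    · exact hpos x (List.mem_cons_of_mem _ hx)
  have hL1s : ((al.part 2 :: al.part 2 :: rest) ++
      List.replicate ((dIdx k w 1 - al.part 2 + 1) / 2) 1).Pairwise (· ≥ ·) := by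
    refine List.pairwise_append.mpr ⟨hmain, repl_sorted _ _, fun x hx y hy => ?_⟩
    have hy1 := List.eq_of_mem_replicate hy
    subst hy1
    exact hmainpos x hx
  have hL1p : ∀ x ∈ (al.part 2 :: al.part 2 :: rest) ++
      List.replicate ((dIdx k w 1 - al.part 2 + 1) / 2) 1, 0 < x := fun x hx => by
    rcases List.mem_append.mp hx with hx | hx
    · exact hmainpos x hx
    · have := List.eq_of_mem_replicate hx; omega
  have hL2s : (be.parts ++
      List.replicate ((dIdx k w 1 - al.part 2 + 1) / 2) 1).Pairwise (· ≥ ·) := by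
    refine List.pairwise_append.mpr ⟨be.sorted, repl_sorted _ _, fun x hx y hy => ?_⟩
    have hy1 := List.eq_of_mem_replicate hy
    subst hy1
    exact be.pos x hx
  have hL2p : ∀ x ∈ be.parts ++
      List.replicate ((dIdx k w 1 - al.part 2 + 1) / 2) 1, 0 < x := fun x hx => by
    rcases List.mem_append.mp hx with hx | hx
    · exact be.pos x hx
    · have := List.eq_of_mem_replicate hx; omega
  refine ⟨rest, hal, hmemrest, ?_, ?_⟩
  · show (mkPartn (al.part 2 :: al.parts.tail ++ _)).parts = _
    rw [hal]
    simp only [List.tail_cons]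
    rw [mkPartn_parts (by simpa using hL1s) (by simpa using hL1p)]
  · show (mkPartn (be.parts ++ _)).parts = _
    rw [mkPartn_parts hL2s hL2p]

/-- Lemma 5.11 (restated). -/theorem lem_pp8 (k : ℕ) (m : ℤ) (n : ℕ) (hk : 3 ≤ k) (hm : 0 ≤ m)
    (hn : k - 1 ≤ n) :
    {t : PTuple k | PkMem k m n t ∧
        dIdx k t.2.2.2 1 = dIdx k t.2.2.2 (k - 1) ∧ 2 ≤ dIdx k t.2.2.2 1 ∧
        t.1.part 1 = dIdx k t.2.2.2 1 ∧ t.1.part 2 < t.1.part 1 ∧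
        1 ≤ t.1.part 2 ∧ Odd (t.1.part 1 - t.1.part 2)}.ncard ≤
      {t : PTuple k | PkMem k m (n + 1) t ∧
        dIdx k t.2.2.2 1 = dIdx k t.2.2.2 (k - 1) ∧ 2 ≤ dIdx k t.2.2.2 1 ∧
        1 ≤ t.1.part 1 ∧ t.1.part 1 = t.1.part 2 ∧
        t.1.part 1 < dIdx k t.2.2.2 1 ∧ Odd (dIdx k t.2.2.2 1 - t.1.part 1) ∧
        (dIdx k t.2.2.2 1 - t.1.part 1 + 1) / 2 ≤ t.2.1.freq 1}.ncard := by
  apply Set.ncard_le_ncard_of_injOn (Fmap k) ?maps ?inj (pk_finite k m (n+1) _)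
  case maps =>
    rintro ⟨al, be, g, w⟩ hmem
    simp only [Set.mem_setOf_eq] at hmem ⊢
    obtain ⟨⟨hsq, hord, hd1, hab, hbb, hlm, hgc, hwt⟩, h1, h2, h3, h4, h5, h6⟩ := hmem
    obtain ⟨rest, hal, hmr, hFa, hFb⟩ := Fmap_parts al be g w h3 h5
    rw [h3] at h4 h6
    obtain ⟨r, hr⟩ := h6
    have hp1 : (Fmap k (al, be, g, w)).1.part 1 = al.part 2 := by
      simp [Partn.part, hFa]
    have hp2 : (Fmap k (al, be, g, w)).1.part 2 = al.part 2 := by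
      simp [Partn.part, hFa]
    have e1 : (Fmap k (al, be, g, w)).1.len =
        al.len + (dIdx k w 1 - al.part 2 + 1) / 2 := by
      rw [Partn.len, Partn.len, hFa, hal]; simp; omega
    have e2 : (Fmap k (al, be, g, w)).2.1.len =
        be.len + (dIdx k w 1 - al.part 2 + 1) / 2 := by
      rw [Partn.len, Partn.len, hFb]; simp
    have e3 : (Fmap k (al, be, g, w)).1.wt =
        al.part 2 + (al.part 2 + rest.sum) + (dIdx k w 1 - al.part 2 + 1) / 2 := by
      rw [Partn.wt, hFa]; simp [List.sum_append, List.sum_replicate]; ring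
    have e4 : al.wt = dIdx k w 1 + (al.part 2 + rest.sum) := by
      rw [Partn.wt, hal]; simp
    have e5 : (Fmap k (al, be, g, w)).2.1.wt =
        be.wt + (dIdx k w 1 - al.part 2 + 1) / 2 := by
      rw [Partn.wt, Partn.wt, hFb]; simp [List.sum_append, List.sum_replicate]
    have hwt' : al.wt + be.wt + (∑ i, (g i).wt) + (∑ i, (w i).wt) = n := hwt
    have hlm' : (al.len : ℤ) - (be.len : ℤ) = m := hlm
    refine ⟨⟨hsq, hord, hd1, ?_, ?_, ?_, hgc, ?_⟩, h1, h2, ?_, ?_, ?_, ?_, ?_⟩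
    · -- alpha bound
      intro x hx
      rw [hFa] at hx
      show x ≤ dIdx k w (k - 1)
      rw [← h1]
      rcases List.mem_cons.mp hx with rfl | hx
      · omega
      · rcases List.mem_cons.mp hx with rfl | hx
        · omega
        · rcases List.mem_append.mp hx with hx | hx
          · have := hab x (hmr x hx); rw [← h1] at this; omega
          · have := List.eq_of_mem_replicate hx; omega
    · -- beta bound
      intro x hx
      rw [hFb] at hx
      show x ≤ dIdx k w (k - 1)
      rw [← h1]
      rcases List.mem_append.mp hx with hx | hx
      · have := hbb x hx; rw [← h1] at this; omega
      · have := List.eq_of_mem_replicate hx; omega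
    · -- length difference
      show ((Fmap k (al, be, g, w)).1.len : ℤ) - ((Fmap k (al, be, g, w)).2.1.len : ℤ) = m
      rw [e1, e2]; push_cast; omega
    · -- weight
      show (Fmap k (al, be, g, w)).1.wt + (Fmap k (al, be, g, w)).2.1.wt +
          (∑ i, (g i).wt) + (∑ i, (w i).wt) = n + 1
      omega
    · -- 1 ≤ part 1
      rw [hp1]; exact h5
    · -- part 1 = part 2
      rw [hp1, hp2]
    · -- part 1 < d
      rw [hp1]
      show al.part 2 < dIdx k w 1
      omega
    · -- Odd
      rw [hp1]
      show Odd (dIdx k w 1 - al.part 2)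
      exact ⟨r, hr⟩
    · -- freq
      rw [hp1]
      have hfq : (Fmap k (al, be, g, w)).2.1.freq 1 =
          be.parts.count 1 + (dIdx k w 1 - al.part 2 + 1) / 2 := by
        rw [Partn.freq, hFb]
        simp [List.count_append]
      show (dIdx k w 1 - al.part 2 + 1) / 2 ≤ (Fmap k (al, be, g, w)).2.1.freq 1
      rw [hfq]; omega
  case inj =>
    rintro ⟨al, be, g, w⟩ hmem ⟨al', be', g', w'⟩ hmem' heq
    simp only [Set.mem_setOf_eq] at hmem hmem'
    obtain ⟨-, -, -, h3, -, h5, -⟩ := hmem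
    obtain ⟨-, -, -, h3', -, h5', -⟩ := hmem'
    obtain ⟨rest, hal, -, hFa, hFb⟩ := Fmap_parts al be g w h3 h5
    obtain ⟨rest', hal', -, hFa', hFb'⟩ := Fmap_parts al' be' g' w' h3' h5'
    have hw : w = w' := congrArg (fun t => t.2.2.2) heq
    have hg : g = g' := congrArg (fun t => t.2.2.1) heq
    have hdeq : dIdx k w 1 = dIdx k w' 1 := by rw [hw]
    have h1eq : (Fmap k (al, be, g, w)).1.parts =
        (Fmap k (al', be', g', w')).1.parts := by rw [heq]
    rw [hFa, hFa'] at h1eq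
    have haa : al.part 2 = al'.part 2 := by
      have := congrArg (fun l => l.headI) h1eq
      simpa using this
    have hseq : (dIdx k w 1 - al.part 2 + 1) / 2 =
        (dIdx k w' 1 - al'.part 2 + 1) / 2 := by rw [hdeq, haa]
    have hrest : rest = rest' := by
      rw [hseq, haa] at h1eq
      simp only [List.cons_append, List.cons.injEq] at h1eq
      exact List.append_cancel_right h1eq.2.2
    have hbeq : be = be' := by
      have h2eq : (Fmap k (al, be, g, w)).2.1.parts =
          (Fmap k (al', be', g', w')).2.1.parts := by rw [heq]
      rw [hFb, hFb', hseq] at h2eq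
      exact Partn.ext' (List.append_cancel_right h2eq)
    have haleq : al = al' := Partn.ext' (by rw [hal, hal', hdeq, haa, hrest])
    rw [haleq, hbeq, hg, hw]
end

section
/- Let k ≥ 3, m ≥ 0 and n ≥ k−1 be integers. Then #{Δ ∈ P_k(m,n) : d_1 = d_{k−1} ≥ 2, α_1 = d_1 > α_2 ≥ 1, and α_1 − α_2 is even} ≤ #{Δ ∈ P_k(m,n+1) : d_1 = d_{k−1} ≥ 2, 1 ≤ α_1 = α_2 < d_1, and d_1 − α_1 is even}. -/
namespace PP9Aux

lemma partn_ext {p q : Partn} (h : p.parts = q.parts) : p = q := by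
  cases p; cases q; simpa using h

/-- The tweak on the first partition: `x :: y :: r ↦ y :: y :: (r ++ [1])`. -/
def atw (l : List ℕ) : List ℕ :=
  match l with
  | _ :: y :: r => y :: y :: (r ++ [1])
  | l => l

lemma atw_sorted {l : List ℕ} (hs : l.Pairwise (· ≥ ·)) (hp : ∀ x ∈ l, 0 < x) :
    (atw l).Pairwise (· ≥ ·) := by
  match l with
  | [] => exact hs
  | [x] => exact hs
  | x :: y :: r =>
    simp only [atw]
    rw [List.pairwise_cons] at hs
    rw [List.pairwise_cons] at hs
    obtain ⟨⟨hxy, hyr⟩, hy_all, hr_sorted⟩ :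
        ((x ≥ y ∧ ∀ b ∈ r, x ≥ b) ∧ (∀ b ∈ r, y ≥ b) ∧ r.Pairwise (· ≥ ·)) := by
      constructor
      · constructor
        · exact hs.1 y (by simp)
        · exact fun b hb => hs.1 b (by simp [hb])
      · exact hs.2
    have hrpos : ∀ a ∈ r, 0 < a := fun a ha => hp a (by simp [ha])
    have hypos : 0 < y := hp y (by simp)
    have hr1 : (r ++ [1]).Pairwise (· ≥ ·) := by
      rw [List.pairwise_append]
      refine ⟨hr_sorted, List.pairwise_singleton _ _, ?_⟩
      intro a ha b hb
      simp only [List.mem_singleton] at hb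
      subst hb
      exact hrpos a ha

    rw [List.pairwise_cons, List.pairwise_cons]
    refine ⟨?_, ?_, hr1⟩
    · intro b hb
      simp only [List.mem_cons, List.mem_append, List.not_mem_nil, or_false] at hb
      rcases hb with rfl | hb | rfl
      · exact le_refl _
      · exact hy_all b hb
      · exact hypos
    · intro b hb
      simp only [List.mem_append, List.mem_cons, List.not_mem_nil, or_false] at hb
      rcases hb with hb | rfl
      · exact hy_all b hb
      · exact hypos

lemma atw_pos {l : List ℕ} (hp : ∀ x ∈ l, 0 < x) : ∀ x ∈ atw l, 0 < x := by
  match l with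
  | [] => exact hp
  | [x] => exact hp
  | x :: y :: r =>
    simp only [atw]
    intro a ha
    simp only [List.mem_cons, List.mem_append, List.not_mem_nil, or_false] at ha
    rcases ha with rfl | rfl | ha | rfl
    · exact hp _ (by simp)
    · exact hp _ (by simp)
    · exact hp a (by simp [ha])
    · exact one_pos

def tweakA (p : Partn) : Partn :=
  ⟨atw p.parts, atw_sorted p.sorted p.pos, atw_pos p.pos⟩

def tweakB (b : ℕ) (p : Partn) : Partn :=
  ⟨p.parts.orderedInsert (· ≥ ·) (max 1 b),
   List.Pairwise.orderedInsert _ _ p.sorted,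
   by
    intro x hx
    rcases (List.mem_orderedInsert _).mp hx with h | h
    · subst h; positivity
    · exact p.pos x h⟩

lemma tweakB_perm (b : ℕ) (p : Partn) :
    (tweakB b p).parts.Perm (max 1 b :: p.parts) :=
  List.perm_orderedInsert _ _ _

def tweak (k : ℕ) (t : PTuple k) : PTuple k :=
  (tweakA t.1, tweakB (dIdx k t.2.2.2 1 - t.1.part 2) t.2.1, t.2.2.1, t.2.2.2)

lemma length_le_sum {l : List ℕ} (hp : ∀ x ∈ l, 0 < x) : l.length ≤ l.sum := by
  induction l with
  | nil => simp
  | cons a l ih =>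
    have h1 := hp a (by simp)
    have h2 := ih (fun x hx => hp x (List.mem_cons_of_mem _ hx))
    simp only [List.length_cons, List.sum_cons]
    omega

lemma finite_lists (N : ℕ) : {l : List ℕ | l.sum ≤ N ∧ ∀ x ∈ l, 0 < x}.Finite := by
  have hT : {l : List (Fin (N + 1)) | l.length ≤ N}.Finite := List.finite_length_le _ N
  apply (hT.image (fun l : List (Fin (N + 1)) => l.map Fin.val)).subset
  rintro l ⟨hsum, hpos⟩
  have hle : ∀ x ∈ l, x < N + 1 := fun x hx =>
    Nat.lt_succ_of_le (le_trans (List.single_le_sum (fun y _ => Nat.zero_le y) x hx) hsum)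
  refine ⟨l.pmap (fun x h => (⟨x, h⟩ : Fin (N + 1))) hle, ?_, ?_⟩
  · simp only [Set.mem_setOf_eq, List.length_pmap]
    exact le_trans (length_le_sum hpos) hsum
  · simp [List.map_pmap]

lemma finite_partn (N : ℕ) : {p : Partn | p.wt ≤ N}.Finite := by
  apply Set.Finite.of_finite_image (f := Partn.parts)
  · apply (finite_lists N).subset
    rintro _ ⟨p, hp, rfl⟩
    exact ⟨hp, p.pos⟩
  · exact fun p _ q _ h => partn_ext h

lemma finite_tuples (k N : ℕ) :
    {t : PTuple k | t.1.wt + t.2.1.wt + (∑ i, (t.2.2.1 i).wt) +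
      (∑ i, (t.2.2.2 i).wt) = N}.Finite := by
  have A := finite_partn N
  apply Set.Finite.subset
    (A.prod (A.prod ((Set.Finite.pi fun _ : Fin (k - 2) => A).prod
      (Set.Finite.pi fun _ : Fin (k - 1) => A))))
  rintro ⟨a, b, g, w⟩ ht
  simp only [Set.mem_setOf_eq] at ht
  have hg : ∀ i, (g i).wt ≤ N := by
    intro i
    have : (g i).wt ≤ ∑ j, (g j).wt :=
      Finset.single_le_sum (f := fun j => (g j).wt) (fun j _ => Nat.zero_le _)
        (Finset.mem_univ i)
    omega
  have hw : ∀ i, (w i).wt ≤ N := by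
    intro i
    have : (w i).wt ≤ ∑ j, (w j).wt :=
      Finset.single_le_sum (f := fun j => (w j).wt) (fun j _ => Nat.zero_le _)
        (Finset.mem_univ i)
    omega
  refine ⟨by simp only [Set.mem_setOf_eq]; omega,
    by simp only [Set.mem_setOf_eq]; omega, ?_, ?_⟩ <;>
    simp only [Set.mem_univ_pi, Set.mem_setOf_eq] <;> intro i
  · exact hg i
  · exact hw i

end PP9Aux

open PP9Aux in
/-- Lemma 5.12 (restated). -/
theorem lem_pp9 (k : ℕ) (m : ℤ) (n : ℕ) (hk : 3 ≤ k) (hm : 0 ≤ m)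
    (hn : k - 1 ≤ n) :
    {t : PTuple k | PkMem k m n t ∧
        dIdx k t.2.2.2 1 = dIdx k t.2.2.2 (k - 1) ∧ 2 ≤ dIdx k t.2.2.2 1 ∧
        t.1.part 1 = dIdx k t.2.2.2 1 ∧ t.1.part 2 < t.1.part 1 ∧
        1 ≤ t.1.part 2 ∧ Even (t.1.part 1 - t.1.part 2)}.ncard ≤
      {t : PTuple k | PkMem k m (n + 1) t ∧
        dIdx k t.2.2.2 1 = dIdx k t.2.2.2 (k - 1) ∧ 2 ≤ dIdx k t.2.2.2 1 ∧
        1 ≤ t.1.part 1 ∧ t.1.part 1 = t.1.part 2 ∧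
        t.1.part 1 < dIdx k t.2.2.2 1 ∧
        Even (dIdx k t.2.2.2 1 - t.1.part 1)}.ncard := by
  classical
  have hTfin : {t : PTuple k | PkMem k m (n + 1) t ∧
        dIdx k t.2.2.2 1 = dIdx k t.2.2.2 (k - 1) ∧ 2 ≤ dIdx k t.2.2.2 1 ∧
        1 ≤ t.1.part 1 ∧ t.1.part 1 = t.1.part 2 ∧
        t.1.part 1 < dIdx k t.2.2.2 1 ∧
        Even (dIdx k t.2.2.2 1 - t.1.part 1)}.Finite := by
    apply (finite_tuples k (n + 1)).subset
    rintro t ⟨ht, -⟩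
    exact ht.2.2.2.2.2.2.2
  apply Set.ncard_le_ncard_of_injOn (tweak k) ?_ ?_ hTfin
  · -- maps to
    rintro ⟨α, β, γ, w⟩ ht
    simp only [Set.mem_setOf_eq] at ht
    obtain ⟨⟨hw, hmono, hd1, hα, hβ, hlen, hγ, hwt⟩, hde, hd2, hp1, hp21, hp2, hev⟩ := ht
    have pr1 : ∀ (a b : Partn) (g : Fin (k - 2) → Partn) (v : Fin (k - 1) → Partn),
        ((a, b, g, v) : PTuple k).1 = a := fun _ _ _ _ => rfl
    have pr2 : ∀ (a b : Partn) (g : Fin (k - 2) → Partn) (v : Fin (k - 1) → Partn),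
        ((a, b, g, v) : PTuple k).2.1 = b := fun _ _ _ _ => rfl
    have pr3 : ∀ (a b : Partn) (g : Fin (k - 2) → Partn) (v : Fin (k - 1) → Partn),
        ((a, b, g, v) : PTuple k).2.2.1 = g := fun _ _ _ _ => rfl
    have pr4 : ∀ (a b : Partn) (g : Fin (k - 2) → Partn) (v : Fin (k - 1) → Partn),
        ((a, b, g, v) : PTuple k).2.2.2 = v := fun _ _ _ _ => rfl
    simp only [pr1, pr2, pr3, pr4] at hw hmono hd1 hα hβ hlen hγ hwt hde hd2 hp1 hp21 hp2 hev
    rcases hpp : α.parts with _ | ⟨x, _ | ⟨y, r⟩⟩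
    · simp [Partn.part, hpp] at hp2
    · simp [Partn.part, hpp] at hp2
    have hx : α.part 1 = x := by simp [Partn.part, hpp]
    have hy : α.part 2 = y := by simp [Partn.part, hpp]
    rw [hx] at hp1 hp21 hev
    rw [hy] at hp21 hp2 hev
    set d := dIdx k w 1 with hd
    have hyd : y < d := by omega
    have hmax : max 1 (d - y) = d - y := by omega
    have hAparts : (tweakA α).parts = y :: y :: (r ++ [1]) := by
      simp [tweakA, atw, hpp]
    have hAwt : (tweakA α).wt = y + (y + (r.sum + 1)) := by
      simp [Partn.wt, hAparts]
    have hAlen : (tweakA α).len = r.length + 3 := by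
      simp [Partn.len, hAparts]
    have hαwt : α.wt = x + (y + r.sum) := by simp [Partn.wt, hpp]
    have hαlen : α.len = r.length + 2 := by simp [Partn.len, hpp]
    have hBperm := tweakB_perm (d - y) β
    rw [hmax] at hBperm
    have hBwt : (tweakB (d - y) β).wt = (d - y) + β.wt := by
      have := hBperm.sum_eq
      simpa [Partn.wt] using this
    have hBlen : (tweakB (d - y) β).len = β.len + 1 := by
      simp [Partn.len, tweakB, List.orderedInsert_length]
    have hBmem : ∀ z ∈ (tweakB (d - y) β).parts, z = d - y ∨ z ∈ β.parts := by
      intro z hz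
      rcases (List.mem_orderedInsert _).mp hz with h | h
      · left; omega
      · right; exact h
    have htweak : tweak k (α, β, γ, w) = (tweakA α, tweakB (d - y) β, γ, w) := by
      simp [tweak, hy, hd]
    simp only [Set.mem_setOf_eq, htweak]
    have hsum3 : (∑ i, (((tweakA α, tweakB (d - y) β, γ, w) : PTuple k).2.2.1 i).wt)
        = ∑ i, (γ i).wt := rfl
    have hsum4 : (∑ i, (((tweakA α, tweakB (d - y) β, γ, w) : PTuple k).2.2.2 i).wt)
        = ∑ i, (w i).wt := rfl
    have hdk : dIdx k (((tweakA α, tweakB (d - y) β, γ, w) : PTuple k).2.2.2) (k - 1)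
        = dIdx k w (k - 1) := rfl
    have hyk : y ≤ dIdx k w (k - 1) := hα y (by simp [hpp])
    refine ⟨⟨hw, hmono, hd1, ?_, ?_, ?_, hγ, ?_⟩, hde, hd2, ?_, ?_, ?_, ?_⟩
    · -- parts of new α bounded
      intro z hz
      rw [hAparts] at hz
      simp only [List.mem_cons, List.mem_append, List.not_mem_nil, or_false] at hz
      rcases hz with rfl | rfl | hz | rfl
      · exact hyk
      · exact hyk
      · exact hα z (by simp [hpp, hz])
      · exact hd1
    · -- parts of new β bounded
      intro z hz
      rcases hBmem z hz with rfl | h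
      · rw [hdk]; omega
      · exact hβ z h
    · -- lengths
      rw [hAlen, hBlen]
      rw [hαlen] at hlen
      push_cast
      push_cast at hlen
      linarith
    · -- weight
      rw [hAwt, hBwt, hsum3, hsum4]
      rw [hαwt] at hwt
      omega
    · simp [Partn.part, hAparts]; omega
    · simp [Partn.part, hAparts]
    · simp only [Partn.part, hAparts]
      simpa using hyd
    · simp only [Partn.part, hAparts]
      have hxd : x = d := hp1
      simpa [hxd] using hev
  · -- injective
    rintro ⟨α₁, β₁, γ₁, w₁⟩ ht1 ⟨α₂, β₂, γ₂, w₂⟩ ht2 heq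
    simp only [Set.mem_setOf_eq] at ht1 ht2
    obtain ⟨⟨_, _, _, _, _, _, _, _⟩, hde1, hd21, hp11, hp211, hp21e, hev1⟩ := ht1
    obtain ⟨⟨_, _, _, _, _, _, _, _⟩, hde2, hd22, hp12, hp212, hp22e, hev2⟩ := ht2
    rcases hpp1 : α₁.parts with _ | ⟨x₁, _ | ⟨y₁, r₁⟩⟩
    · simp [Partn.part, hpp1] at hp21e
    · simp [Partn.part, hpp1] at hp21e
    rcases hpp2 : α₂.parts with _ | ⟨x₂, _ | ⟨y₂, r₂⟩⟩
    · simp [Partn.part, hpp2] at hp22e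
    · simp [Partn.part, hpp2] at hp22e
    have hA : tweakA α₁ = tweakA α₂ := congrArg Prod.fst heq
    have hB : tweakB (dIdx k w₁ 1 - α₁.part 2) β₁ =
        tweakB (dIdx k w₂ 1 - α₂.part 2) β₂ := congrArg (fun t => t.2.1) heq
    have hG : γ₁ = γ₂ := congrArg (fun t => t.2.2.1) heq
    have hW : w₁ = w₂ := congrArg (fun t => t.2.2.2) heq
    -- α's parts
    have hAp : (tweakA α₁).parts = (tweakA α₂).parts := congrArg Partn.parts hA
    rw [show (tweakA α₁).parts = y₁ :: y₁ :: (r₁ ++ [1]) by simp [tweakA, atw, hpp1],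
      show (tweakA α₂).parts = y₂ :: y₂ :: (r₂ ++ [1]) by simp [tweakA, atw, hpp2]] at hAp
    simp only [List.cons.injEq] at hAp
    obtain ⟨hy12, -, hr12⟩ := hAp
    have hr : r₁ = r₂ := by
      have := congrArg List.dropLast hr12
      simpa [List.dropLast_concat] using this
    have hx1 : α₁.part 1 = x₁ := by simp [Partn.part, hpp1]
    have hx2 : α₂.part 1 = x₂ := by simp [Partn.part, hpp2]
    have hxx : x₁ = x₂ := by
      rw [hx1] at hp11; rw [hx2] at hp12
      rw [hp11, hp12, hW]
    have hαEq : α₁ = α₂ := partn_ext (by rw [hpp1, hpp2, hxx, hy12, hr])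
    -- β's
    have hy1 : α₁.part 2 = y₁ := by simp [Partn.part, hpp1]
    have hy2 : α₂.part 2 = y₂ := by simp [Partn.part, hpp2]
    have hbEq : dIdx k w₁ 1 - α₁.part 2 = dIdx k w₂ 1 - α₂.part 2 := by
      rw [hy1, hy2, hy12, hW]
    rw [hbEq] at hB
    have hBp : (tweakB (dIdx k w₂ 1 - α₂.part 2) β₁).parts =
        (tweakB (dIdx k w₂ 1 - α₂.part 2) β₂).parts := congrArg Partn.parts hB
    have hperm : (max 1 (dIdx k w₂ 1 - α₂.part 2) :: β₁.parts).Perm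
        (max 1 (dIdx k w₂ 1 - α₂.part 2) :: β₂.parts) := by
      refine ((tweakB_perm _ β₁).symm.trans ?_).trans (tweakB_perm _ β₂)
      rw [hBp]
    have hβEq : β₁ = β₂ :=
      partn_ext (List.Perm.eq_of_pairwise' β₁.sorted β₂.sorted hperm.cons_inv)
    rw [hαEq, hβEq, hG, hW]
end

section
/- Let k ≥ 4, m ≥ 0 and n ≥ k−1 be integers. Then #{Δ ∈ P_k(m,n) : d_1 = d_{k−1} ≥ 2, α_1 = α_2 = d_1 > α_3, and β = ∅} = #{Δ ∈ P_k(m,n+1) : d_1 ≥ 3, d_i = d_1 − 1 for all 2 ≤ i ≤ k−2, d_{k−1} = d_1 − 2, γ^1 = ⋯ = γ^{k−3} = ∅, γ^{k−2} = (1), α_1 = α_2 = d_{k−1}, and β = ∅}. -/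
namespace Helper

theorem Partn.ext' {p q : Partn} (h : p.parts = q.parts) : p = q := by
  cases p; cases q; simp_all

/-- Make a partition from a list, defaulting to empty if invalid. -/
def pmk (l : List ℕ) : Partn :=
  if h : l.Pairwise (· ≥ ·) ∧ ∀ x ∈ l, 0 < x then ⟨l, h.1, h.2⟩ else Partn.empty

lemma pmk_parts {l : List ℕ} (h1 : l.Pairwise (· ≥ ·)) (h2 : ∀ x ∈ l, 0 < x) :
    (pmk l).parts = l := by
  rw [pmk, dif_pos ⟨h1, h2⟩]

/-- The square partition `(d^d)`. -/
def sq (d : ℕ) : Partn :=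
  ⟨List.replicate d d, List.pairwise_replicate.mpr (by simp),
   by intro x hx; simp only [List.mem_replicate] at hx; omega⟩

@[simp] lemma sq_parts (d : ℕ) : (sq d).parts = List.replicate d d := rfl
@[simp] lemma sq_len (d : ℕ) : (sq d).len = d := by simp [Partn.len, sq]
@[simp] lemma sq_wt (d : ℕ) : (sq d).wt = d * d := by simp [Partn.wt, sq, List.sum_replicate, Nat.smul_one_eq_cast]

@[simp] lemma empty_parts : Partn.empty.parts = [] := rfl
@[simp] lemma empty_len : Partn.empty.len = 0 := rfl
@[simp] lemma empty_wt : Partn.empty.wt = 0 := rfl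

lemma getD_le {l : List ℕ} {c : ℕ} (i : ℕ) (h : ∀ x ∈ l, x ≤ c) : l.getD i 0 ≤ c := by
  rcases Nat.lt_or_ge i l.length with hi | hi
  · rw [List.getD_eq_getElem l 0 hi]; exact h _ (List.getElem_mem hi)
  · rw [List.getD_eq_default l 0 hi]; exact Nat.zero_le _

lemma mem_le_head {l : List ℕ} (hs : l.Pairwise (· ≥ ·)) {x : ℕ} (hx : x ∈ l) :
    x ≤ l.getD 0 0 := by
  cases l with
  | nil => simp at hx
  | cons a l =>
    rcases List.mem_cons.mp hx with rfl | h
    · simp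
    · simpa using (List.pairwise_cons.mp hs).1 x h

lemma exists_cons2 : ∀ {l : List ℕ}, 2 ≤ l.length → ∃ x y t, l = x :: y :: t
  | x :: y :: t, _ => ⟨x, y, t, rfl⟩
  | [], h => by simp at h
  | [x], h => by simp at h

lemma dIdx_self (k : ℕ) (w : Fin (k - 1) → Partn) {j : ℕ} (h2 : j - 1 < k - 1) :
    dIdx k w j = (w ⟨j - 1, h2⟩).len := dif_pos h2

lemma gIdx_empty (k j : ℕ) : gIdx k (fun _ => Partn.empty) j = Partn.empty := by
  rw [gIdx]; split <;> rfl

lemma dIdx_anti (k : ℕ) (w : Fin (k - 1) → Partn)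
    (h2 : ∀ j, 1 ≤ j → j + 1 ≤ k - 1 → dIdx k w (j + 1) ≤ dIdx k w j) :
    ∀ a b : ℕ, 1 ≤ a → a ≤ b → b ≤ k - 1 → dIdx k w b ≤ dIdx k w a := by
  intro a b ha hab hb
  induction b with
  | zero => omega
  | succ b ih =>
    rcases Nat.eq_or_lt_of_le hab with h | h
    · rw [h]
    · exact le_trans (h2 b (by omega) hb) (ih (by omega) (by omega))

/-- Parameter set. -/
def QSet (k : ℕ) (m : ℤ) (n : ℕ) : Set (ℕ × Partn) :=
  {p | 2 ≤ p.1 ∧ (∀ x ∈ p.2.parts, x ≤ p.1 - 1) ∧ ((p.2.len : ℤ) + 2 = m) ∧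
    p.2.wt + 2 * p.1 + (k - 1) * p.1 ^ 2 = n}

def Ff (k : ℕ) (p : ℕ × Partn) : PTuple k :=
  (pmk (p.1 :: p.1 :: p.2.parts), Partn.empty, fun _ => Partn.empty, fun _ => sq p.1)

def Gg (k : ℕ) (p : ℕ × Partn) : PTuple k :=
  (pmk ((p.1 - 1) :: (p.1 - 1) :: p.2.parts), Partn.empty,
   fun i => if i.val = k - 3 then pmk [1] else Partn.empty,
   fun i => if i.val = 0 then sq (p.1 + 1) else if i.val = k - 2 then sq (p.1 - 1) else sq p.1)

lemma pmk_cons2_parts {d : ℕ} {μ : Partn} (hd : 1 ≤ d) (hμ : ∀ x ∈ μ.parts, x ≤ d) :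
    (pmk (d :: d :: μ.parts)).parts = d :: d :: μ.parts := by
  apply pmk_parts
  · simp only [List.pairwise_cons]
    refine ⟨?_, ?_, μ.sorted⟩
    · intro b hb
      rcases List.mem_cons.mp hb with h | h
      · omega
      · exact hμ b h
    · intro b hb; exact hμ b hb
  · intro x hx
    rcases List.mem_cons.mp hx with h | h
    · omega
    rcases List.mem_cons.mp h with h | h
    · omega
    · exact μ.pos x h

lemma injOn_Ff (k : ℕ) (m : ℤ) (n : ℕ) (hk : 4 ≤ k) :
    Set.InjOn (Ff k) (QSet k m n) := by
  rintro ⟨d, μ⟩ hp ⟨e, ν⟩ hq h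
  obtain ⟨hd2, hdb, -, -⟩ := hp
  obtain ⟨he2, heb, -, -⟩ := hq
  have h1 := congrArg (fun t : PTuple k => t.1.parts) h
  simp only [Ff] at h1
  rw [pmk_cons2_parts (by omega) (fun x hx => by have := hdb x hx; omega),
    pmk_cons2_parts (by omega) (fun x hx => by have := heb x hx; omega)] at h1
  simp only [List.cons.injEq] at h1
  exact Prod.ext h1.1 (Partn.ext' h1.2.2)

lemma injOn_Gg (k : ℕ) (m : ℤ) (n : ℕ) (hk : 4 ≤ k) :
    Set.InjOn (Gg k) (QSet k m n) := by
  rintro ⟨d, μ⟩ hp ⟨e, ν⟩ hq h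
  obtain ⟨hd2, hdb, -, -⟩ := hp
  obtain ⟨he2, heb, -, -⟩ := hq
  have h1 := congrArg (fun t : PTuple k => t.1.parts) h
  have h2 := congrArg (fun t : PTuple k => (t.2.2.2 ⟨0, by omega⟩).len) h
  simp only [Gg] at h1 h2
  rw [pmk_cons2_parts (by omega) hdb, pmk_cons2_parts (by omega) heb] at h1
  norm_num at h2
  simp only [List.cons.injEq] at h1
  exact Prod.ext (by omega) (Partn.ext' h1.2.2)

lemma S_eq (k : ℕ) (m : ℤ) (n : ℕ) (hk : 4 ≤ k) :
    {t : PTuple k | PkMem k m n t ∧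
        dIdx k t.2.2.2 1 = dIdx k t.2.2.2 (k - 1) ∧ 2 ≤ dIdx k t.2.2.2 1 ∧
        t.1.part 1 = dIdx k t.2.2.2 1 ∧ t.1.part 2 = dIdx k t.2.2.2 1 ∧
        t.1.part 3 < dIdx k t.2.2.2 1 ∧ t.2.1.parts = []} = Ff k '' QSet k m n := by
  ext t
  obtain ⟨a, b, g, w⟩ := t
  simp only [Set.mem_setOf_eq, Set.mem_image]
  constructor
  · rintro ⟨⟨h1, h2, h3, h4, h5, h6, h7, h8⟩, he, hd2, ha1, ha2, ha3, hb⟩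
    dsimp only at h1 h2 h3 h4 h5 h6 h7 h8
    set d := dIdx k w 1 with hd
    have hall : ∀ j, 1 ≤ j → j ≤ k - 1 → dIdx k w j = d := by
      intro j hj1 hj2
      have l1 := dIdx_anti k w h2 1 j (le_refl _) hj1 hj2
      have l2 := dIdx_anti k w h2 j (k - 1) hj1 hj2 (le_refl _)
      omega
    have hw : ∀ i : Fin (k - 1), w i = sq d := by
      intro i
      have hlen : (w i).len = d := by
        have h := hall (i.val + 1) (by omega) (by omega)
        rw [dIdx_self k w (by omega)] at h
        have hi : (⟨i.val + 1 - 1, by omega⟩ : Fin (k - 1)) = i := by ext; simp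
        rwa [hi] at h
      apply Partn.ext'
      rw [h1 i, hlen, sq_parts]
    have hg : ∀ i : Fin (k - 2), g i = Partn.empty := by
      intro i
      have h7' := h7 (i.val + 1) (by omega) (by omega)
      rw [hall (i.val + 1) (by omega) (by omega),
        hall (i.val + 1 + 1) (by omega) (by omega)] at h7'
      have hz : (gIdx k g (i.val + 1)).len = 0 := by omega
      rw [gIdx, dif_pos (by omega : i.val + 1 - 1 < k - 2)] at hz
      have hi : (⟨i.val + 1 - 1, by omega⟩ : Fin (k - 2)) = i := by ext; simp
      rw [hi] at hz
      exact Partn.ext' (List.length_eq_zero_iff.mp hz)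
    have h2le : 2 ≤ a.parts.length := by
      by_contra hc
      push_neg at hc
      rw [Partn.part, List.getD_eq_default _ _ (by omega)] at ha2
      omega
    obtain ⟨x, y, l2, hap⟩ := exists_cons2 h2le
    have hx : x = d := by
      have h := ha1; rw [Partn.part, hap] at h; simpa using h
    have hy : y = d := by
      have h := ha2; rw [Partn.part, hap] at h; simpa using h
    subst hx hy
    have hsort := a.sorted; rw [hap] at hsort
    simp only [List.pairwise_cons] at hsort
    have hpos := a.pos; rw [hap] at hpos
    have h3' : l2.getD 0 0 < d := by
      have h := ha3; rw [Partn.part, hap] at h; simpa using h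
    refine ⟨⟨d, ⟨l2, hsort.2.2, fun z hz => hpos z (by simp [hz])⟩⟩, ⟨hd2, ?_, ?_, ?_⟩, ?_⟩
    · intro z hz
      have := mem_le_head hsort.2.2 hz
      omega
    · have hb0 : b.len = 0 := by rw [Partn.len, hb]; rfl
      have ha0 : a.len = l2.length + 2 := by rw [Partn.len, hap]; simp
      rw [ha0, hb0] at h6
      show ((l2.length : ℤ) + 2 = m)
      push_cast at h6 ⊢
      omega
    · have hbw : b.wt = 0 := by rw [Partn.wt, hb]; rfl
      have haw : a.wt = d + d + l2.sum := by rw [Partn.wt, hap]; simp; ring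
      have hgw : (∑ i, (g i).wt) = 0 := by simp [hg]
      have hww : (∑ i, (w i).wt) = (k - 1) * (d * d) := by
        simp [hw, Finset.sum_const, Fintype.card_fin]
      rw [haw, hbw, hgw, hww] at h8
      show l2.sum + 2 * d + (k - 1) * d ^ 2 = n
      rw [pow_two]
      linarith
    · refine Prod.ext ?_ (Prod.ext ?_ (Prod.ext ?_ ?_))
      · apply Partn.ext'
        rw [Ff]
        have := pmk_cons2_parts (d := d) (μ := ⟨l2, hsort.2.2, fun z hz => hpos z (by simp [hz])⟩)
          (by omega) (fun z hz => by have := mem_le_head hsort.2.2 hz; omega)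
        rw [this, hap]
      · exact Partn.ext' hb.symm
      · funext i; exact (hg i).symm
      · funext i; exact (hw i).symm
  · rintro ⟨⟨d, μ⟩, ⟨hd2, hbd, hlm, hwt⟩, heq⟩
    obtain ⟨rfl, rfl, rfl, rfl⟩ : (pmk (d :: d :: μ.parts) = a) ∧ (Partn.empty = b) ∧
        ((fun _ => Partn.empty) = g) ∧ ((fun (_ : Fin (k - 1)) => sq d) = w) := by
      rw [Prod.ext_iff, Prod.ext_iff, Prod.ext_iff] at heq
      exact ⟨heq.1, heq.2.1, heq.2.2.1, heq.2.2.2⟩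
    have hap : (pmk (d :: d :: μ.parts)).parts = d :: d :: μ.parts :=
      pmk_cons2_parts (by omega) (fun z hz => by have := hbd z hz; omega)
    have hdI : ∀ j, 1 ≤ j → j ≤ k - 1 → dIdx k (fun _ => sq d) j = d := by
      intro j h1 h2
      rw [dIdx, dif_pos (by omega : j - 1 < k - 1)]; simp
    refine ⟨⟨fun i => by simp, ?_, ?_, ?_, by simp, ?_, ?_, ?_⟩, ?_, ?_, ?_, ?_, ?_, by simp⟩
    · intro j h1 h2
      rw [hdI j h1 (by omega), hdI (j + 1) (by omega) h2]
    · rw [hdI (k - 1) (by omega) (le_refl _)]; omega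
    · intro z hz
      rw [hdI (k - 1) (by omega) (le_refl _)]
      rw [hap] at hz
      rcases List.mem_cons.mp hz with rfl | hz
      · omega
      rcases List.mem_cons.mp hz with rfl | hz
      · omega
      · have := hbd z hz; omega
    · show ((pmk (d :: d :: μ.parts)).len : ℤ) - (Partn.empty.len : ℤ) = m
      rw [Partn.len, hap]
      simp only [List.length_cons, empty_len]
      push_cast
      rw [Partn.len] at hlm
      push_cast at hlm
      omega
    · intro j h1 h2
      rw [gIdx_empty]
      simp
    · show (pmk (d :: d :: μ.parts)).wt + Partn.empty.wt + _ + _ = n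
      have haw : (pmk (d :: d :: μ.parts)).wt = d + d + μ.wt := by
        rw [Partn.wt, hap]; simp [Partn.wt]; ring
      have hww : (∑ i : Fin (k - 1), (sq d).wt) = (k - 1) * (d * d) := by
        simp [Finset.sum_const, Fintype.card_fin]
      rw [haw, hww]
      simp only [empty_wt, Finset.sum_const_zero]
      rw [pow_two] at hwt
      linarith
    · rw [hdI 1 (le_refl _) (by omega), hdI (k - 1) (by omega) (le_refl _)]
    · rw [hdI 1 (le_refl _) (by omega)]; exact hd2
    · rw [Partn.part, hap, hdI 1 (le_refl _) (by omega)]; simp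
    · rw [Partn.part, hap, hdI 1 (le_refl _) (by omega)]; simp
    · rw [Partn.part, hap, hdI 1 (le_refl _) (by omega)]
      have : (d :: d :: μ.parts).getD 2 0 = μ.parts.getD 0 0 := by simp
      rw [this]
      have := getD_le (l := μ.parts) 0 hbd
      omega

lemma pmk_one : (pmk [1]).parts = [1] :=
  pmk_parts (List.pairwise_singleton _ 1) (by simp)

lemma key_id (k d : ℕ) (hk : 4 ≤ k) (hd : 2 ≤ d) :
    (d - 1) + (d - 1) + 1 + ((d + 1) * (d + 1) + ((d - 1) * (d - 1) + (k - 3) * (d * d)))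
      = 2 * d + (k - 1) * (d * d) + 1 := by
  obtain ⟨e, rfl⟩ : ∃ e, d = e + 2 := ⟨d - 2, by omega⟩
  obtain ⟨c, rfl⟩ : ∃ c, k = c + 4 := ⟨k - 4, by omega⟩
  have h1 : e + 2 - 1 = e + 1 := by omega
  have h2 : c + 4 - 3 = c + 1 := by omega
  have h3 : c + 4 - 1 = c + 3 := by omega
  rw [h1, h2, h3]; ring

lemma dIdxG (k d : ℕ) (hk : 4 ≤ k) :
    ∀ j, 1 ≤ j → j ≤ k - 1 →
      dIdx k (fun i : Fin (k - 1) =>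
          if i.val = 0 then sq (d + 1) else if i.val = k - 2 then sq (d - 1) else sq d) j
        = if j = 1 then d + 1 else if j = k - 1 then d - 1 else d := by
  intro j h1 h2
  rw [dIdx, dif_pos (by omega : j - 1 < k - 1)]
  dsimp only
  rcases eq_or_ne j 1 with rfl | hj1
  · simp only [if_pos rfl]
    norm_num
  · rcases eq_or_ne j (k - 1) with rfl | hj2
    · rw [if_neg hj1, if_pos rfl, if_neg (by omega), if_pos (by omega), sq_len]
    · rw [if_neg hj1, if_neg hj2, if_neg (by omega), if_neg (by omega), sq_len]

lemma gIdxG (k : ℕ) (hk : 4 ≤ k) :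
    ∀ j, 1 ≤ j → j ≤ k - 2 →
      gIdx k (fun i : Fin (k - 2) => if i.val = k - 3 then pmk [1] else Partn.empty) j
        = if j = k - 2 then pmk [1] else Partn.empty := by
  intro j h1 h2
  rw [gIdx, dif_pos (by omega : j - 1 < k - 2)]
  dsimp only
  rcases eq_or_ne j (k - 2) with rfl | hj
  · rw [if_pos rfl, if_pos (by omega)]
  · rw [if_neg hj, if_neg (by omega)]

lemma sum_g (k : ℕ) (hk : 4 ≤ k) :
    (∑ i : Fin (k - 2), ((if i.val = k - 3 then pmk [1] else Partn.empty)).wt) = 1 := by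
  have i0 : Fin (k - 2) := ⟨k - 3, by omega⟩
  have hcast : ∀ i : Fin (k - 2),
      (if i.val = k - 3 then pmk [1] else Partn.empty).wt
        = if i = (⟨k - 3, by omega⟩ : Fin (k - 2)) then 1 else 0 := by
    intro i
    by_cases h : i.val = k - 3
    · rw [if_pos h, if_pos (Fin.ext h)]
      rw [Partn.wt, pmk_one]; simp
    · rw [if_neg h, if_neg (fun hh => h (by rw [hh])), empty_wt]
  rw [Finset.sum_congr rfl (fun i _ => hcast i),
    Finset.sum_ite_eq' Finset.univ (⟨k - 3, by omega⟩ : Fin (k - 2)) (fun _ => 1)]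
  simp

lemma sum_w (k d : ℕ) (hk : 4 ≤ k) :
    (∑ i : Fin (k - 1),
        ((if i.val = 0 then sq (d + 1) else if i.val = k - 2 then sq (d - 1) else sq d)).wt)
      = (d + 1) * (d + 1) + ((d - 1) * (d - 1) + (k - 3) * (d * d)) := by
  set f : ℕ → ℕ := fun v =>
    (if v = 0 then sq (d + 1) else if v = k - 2 then sq (d - 1) else sq d).wt with hf
  have : (∑ i : Fin (k - 1),
      ((if i.val = 0 then sq (d + 1) else if i.val = k - 2 then sq (d - 1) else sq d)).wt)
      = ∑ j ∈ Finset.range (k - 1), f j := Fin.sum_univ_eq_sum_range f (k - 1)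
  rw [this]
  have h0 : 0 ∈ Finset.range (k - 1) := by simp; omega
  rw [← Finset.add_sum_erase _ f h0]
  have h1 : k - 2 ∈ (Finset.range (k - 1)).erase 0 := by
    rw [Finset.mem_erase]; constructor
    · omega
    · simp; omega
  rw [← Finset.add_sum_erase _ f h1]
  have hf0 : f 0 = (d + 1) * (d + 1) := by rw [hf]; simp
  have hf1 : f (k - 2) = (d - 1) * (d - 1) := by
    rw [hf]; dsimp only; rw [if_neg (by omega), if_pos rfl, sq_wt]
  have hrest : (∑ x ∈ ((Finset.range (k - 1)).erase 0).erase (k - 2), f x)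
      = (k - 3) * (d * d) := by
    rw [Finset.sum_congr rfl (fun x hx => ?_), Finset.sum_const, smul_eq_mul]
    · congr 1
      rw [Finset.card_erase_of_mem h1, Finset.card_erase_of_mem h0, Finset.card_range]
      omega
    · rw [Finset.mem_erase, Finset.mem_erase, Finset.mem_range] at hx
      rw [hf]; dsimp only; rw [if_neg hx.2.1, if_neg hx.1, sq_wt]
  rw [hf0, hf1, hrest]

lemma T_eq (k : ℕ) (m : ℤ) (n : ℕ) (hk : 4 ≤ k) :
    {t : PTuple k | PkMem k m (n + 1) t ∧ 3 ≤ dIdx k t.2.2.2 1 ∧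
        (∀ j, 2 ≤ j → j ≤ k - 2 → dIdx k t.2.2.2 j = dIdx k t.2.2.2 1 - 1) ∧
        dIdx k t.2.2.2 (k - 1) = dIdx k t.2.2.2 1 - 2 ∧
        (∀ j, 1 ≤ j → j ≤ k - 3 → (gIdx k t.2.2.1 j).parts = []) ∧
        (gIdx k t.2.2.1 (k - 2)).parts = [1] ∧
        t.1.part 1 = dIdx k t.2.2.2 (k - 1) ∧
        t.1.part 2 = dIdx k t.2.2.2 (k - 1) ∧ t.2.1.parts = []} = Gg k '' QSet k m n := by
  ext t
  obtain ⟨a, b, g, w⟩ := t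
  simp only [Set.mem_setOf_eq, Set.mem_image]
  constructor
  · rintro ⟨⟨h1, h2, h3, h4, h5, h6, h7, h8⟩, hd3, hmid, hlast, hge, hgl, ha1, ha2, hb⟩
    dsimp only at h1 h2 h3 h4 h5 h6 h7 h8
    set d : ℕ := dIdx k w 1 - 1 with hd
    have hD : dIdx k w 1 = d + 1 := by omega
    have hallj : ∀ j, 1 ≤ j → j ≤ k - 1 →
        dIdx k w j = if j = 1 then d + 1 else if j = k - 1 then d - 1 else d := by
      intro j hj1 hj2
      rcases eq_or_ne j 1 with rfl | hj1'
      · rw [if_pos rfl]; exact hD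
      · rcases eq_or_ne j (k - 1) with rfl | hj2'
        · rw [if_neg hj1', if_pos rfl, hlast]; omega
        · rw [if_neg hj1', if_neg hj2', hmid j (by omega) (by omega)]
    have hw : ∀ i : Fin (k - 1), w i =
        (if i.val = 0 then sq (d + 1) else if i.val = k - 2 then sq (d - 1) else sq d) := by
      intro i
      have hj := hallj (i.val + 1) (by omega) (by omega)
      rw [dIdx_self k w (by omega)] at hj
      have hi : (⟨i.val + 1 - 1, by omega⟩ : Fin (k - 1)) = i := by ext; simp
      rw [hi] at hj
      have hlen : (w i).len = if i.val + 1 = 1 then d + 1 else if i.val + 1 = k - 1 then d - 1 else d := hj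
      apply Partn.ext'
      rw [h1 i]
      by_cases h0 : i.val = 0
      · rw [if_pos h0]
        have : (w i).len = d + 1 := by
          rw [hlen, if_pos (by omega)]
        rw [this]; simp
      · rw [if_neg h0]
        by_cases hk2 : i.val = k - 2
        · rw [if_pos hk2]
          have : (w i).len = d - 1 := by
            rw [hlen, if_neg (by omega), if_pos (by omega)]
          rw [this]; simp
        · rw [if_neg hk2]
          have : (w i).len = d := by
            rw [hlen, if_neg (by omega), if_neg (by omega)]
          rw [this]; simp
    have hg : ∀ i : Fin (k - 2), g i =
        (if i.val = k - 3 then pmk [1] else Partn.empty) := by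
      intro i
      by_cases h : i.val = k - 3
      · rw [if_pos h]
        apply Partn.ext'
        rw [pmk_one]
        rw [gIdx, dif_pos (by omega : k - 2 - 1 < k - 2)] at hgl
        have hi : (⟨k - 2 - 1, by omega⟩ : Fin (k - 2)) = i := by ext; simp; omega
        rwa [hi] at hgl
      · rw [if_neg h]
        apply Partn.ext'
        have hgp := hge (i.val + 1) (by omega) (by omega)
        rw [gIdx, dif_pos (by omega : i.val + 1 - 1 < k - 2)] at hgp
        have hi : (⟨i.val + 1 - 1, by omega⟩ : Fin (k - 2)) = i := by ext; simp
        rwa [hi] at hgp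
    have hdk1 : dIdx k w (k - 1) = d - 1 := by
      rw [hallj (k - 1) (by omega) (le_refl _), if_neg (by omega), if_pos rfl]
    have hd2 : 2 ≤ d := by
      have := h3; rw [hdk1] at this; omega
    rw [hdk1] at ha1 ha2
    have h2le : 2 ≤ a.parts.length := by
      by_contra hc
      push_neg at hc
      rw [Partn.part, List.getD_eq_default _ _ (by omega)] at ha2
      omega
    obtain ⟨x, y, l2, hap⟩ := exists_cons2 h2le
    have hx : x = d - 1 := by
      have h := ha1; rw [Partn.part, hap] at h; simpa using h
    have hy : y = d - 1 := by
      have h := ha2; rw [Partn.part, hap] at h; simpa using h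
    subst hx hy
    have hsort := a.sorted; rw [hap] at hsort
    simp only [List.pairwise_cons] at hsort
    have hpos := a.pos; rw [hap] at hpos
    refine ⟨⟨d, ⟨l2, hsort.2.2, fun z hz => hpos z (by simp [hz])⟩⟩, ⟨hd2, ?_, ?_, ?_⟩, ?_⟩
    · intro z hz
      have := h4 z (by rw [hap]; simp [hz])
      rw [hdk1] at this
      exact this
    · have hb0 : b.len = 0 := by rw [Partn.len, hb]; rfl
      have ha0 : a.len = l2.length + 2 := by rw [Partn.len, hap]; simp
      rw [ha0, hb0] at h6
      show ((l2.length : ℤ) + 2 = m)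
      push_cast at h6 ⊢
      omega
    · have hbw : b.wt = 0 := by rw [Partn.wt, hb]; rfl
      have haw : a.wt = (d - 1) + (d - 1) + l2.sum := by rw [Partn.wt, hap]; simp; ring
      have hgw : (∑ i, (g i).wt) = 1 := by
        rw [Finset.sum_congr rfl (fun i _ => by rw [hg i])]
        exact sum_g k hk
      have hww : (∑ i, (w i).wt)
          = (d + 1) * (d + 1) + ((d - 1) * (d - 1) + (k - 3) * (d * d)) := by
        rw [Finset.sum_congr rfl (fun i _ => by rw [hw i])]
        exact sum_w k d hk
      rw [haw, hbw, hgw, hww] at h8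
      show l2.sum + 2 * d + (k - 1) * d ^ 2 = n
      rw [pow_two]
      have := key_id k d hk hd2
      linarith
    · refine Prod.ext ?_ (Prod.ext ?_ (Prod.ext ?_ ?_))
      · apply Partn.ext'
        rw [Gg]
        have := pmk_cons2_parts (d := d - 1)
          (μ := ⟨l2, hsort.2.2, fun z hz => hpos z (by simp [hz])⟩)
          (by omega) (fun z hz => by
            have := h4 z (by rw [hap]; simp [hz])
            rw [hdk1] at this
            exact this)
        rw [this, hap]
      · exact Partn.ext' hb.symm
      · funext i; exact (hg i).symm
      · funext i; exact (hw i).symm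
  · rintro ⟨⟨d, μ⟩, ⟨hd2, hbd, hlm, hwt⟩, heq⟩
    obtain ⟨rfl, rfl, rfl, rfl⟩ : (pmk ((d - 1) :: (d - 1) :: μ.parts) = a) ∧
        (Partn.empty = b) ∧
        ((fun i : Fin (k - 2) => if i.val = k - 3 then pmk [1] else Partn.empty) = g) ∧
        ((fun i : Fin (k - 1) =>
            if i.val = 0 then sq (d + 1) else if i.val = k - 2 then sq (d - 1) else sq d) = w) := by
      rw [Prod.ext_iff, Prod.ext_iff, Prod.ext_iff] at heq
      exact ⟨heq.1, heq.2.1, heq.2.2.1, heq.2.2.2⟩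
    have hap : (pmk ((d - 1) :: (d - 1) :: μ.parts)).parts = (d - 1) :: (d - 1) :: μ.parts :=
      pmk_cons2_parts (by omega) hbd
    have hdI := dIdxG k d hk
    have hgI := gIdxG k hk
    have hpl : (pmk [1]).len = 1 := by rw [Partn.len, pmk_one]; rfl
    refine ⟨⟨fun i => by dsimp only; split_ifs <;> simp, ?_, ?_, ?_, by simp, ?_, ?_, ?_⟩,
      ?_, ?_, ?_, ?_, ?_, ?_, ?_, by simp⟩
    · intro j h1 h2
      rw [hdI j h1 (by omega), hdI (j + 1) (by omega) h2]
      split_ifs <;> omega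
    · rw [hdI (k - 1) (by omega) (le_refl _), if_neg (by omega), if_pos rfl]
      omega
    · intro z hz
      rw [hdI (k - 1) (by omega) (le_refl _), if_neg (by omega), if_pos rfl]
      rw [hap] at hz
      rcases List.mem_cons.mp hz with rfl | hz
      · omega
      rcases List.mem_cons.mp hz with rfl | hz
      · omega
      · exact hbd z hz
    · show ((pmk ((d - 1) :: (d - 1) :: μ.parts)).len : ℤ) - (Partn.empty.len : ℤ) = m
      rw [Partn.len, hap]
      simp only [List.length_cons, empty_len]
      push_cast
      rw [Partn.len] at hlm
      push_cast at hlm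
      omega
    · intro j h1 h2
      rw [hgI j h1 h2, hdI j h1 (by omega), hdI (j + 1) (by omega) (by omega)]
      by_cases hj : j = k - 2
      · rw [if_pos hj, hpl]
        split_ifs <;> omega
      · rw [if_neg hj]
        simp
    · show (pmk ((d - 1) :: (d - 1) :: μ.parts)).wt + Partn.empty.wt + _ + _ = n + 1
      have haw : (pmk ((d - 1) :: (d - 1) :: μ.parts)).wt = (d - 1) + (d - 1) + μ.wt := by
        rw [Partn.wt, hap]; simp [Partn.wt]; ring
      rw [haw, sum_g k hk, sum_w k d hk]
      simp only [empty_wt]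
      rw [pow_two] at hwt
      have := key_id k d hk hd2
      linarith
    · rw [hdI 1 (le_refl _) (by omega), if_pos rfl]; omega
    · intro j h1 h2
      rw [hdI j (by omega) (by omega), hdI 1 (le_refl _) (by omega), if_pos rfl,
        if_neg (by omega), if_neg (by omega)]
      omega
    · rw [hdI (k - 1) (by omega) (le_refl _), hdI 1 (le_refl _) (by omega), if_pos rfl,
        if_neg (by omega), if_pos rfl]
      omega
    · intro j h1 h2
      rw [hgI j h1 (by omega), if_neg (by omega)]
      simp
    · rw [hgI (k - 2) (by omega) (le_refl _), if_pos rfl, pmk_one]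
    · rw [hdI (k - 1) (by omega) (le_refl _), if_neg (by omega), if_pos rfl,
        Partn.part, hap]
      simp
    · rw [hdI (k - 1) (by omega) (le_refl _), if_neg (by omega), if_pos rfl,
        Partn.part, hap]
      simp

end Helper

/-- Lemma 5.15 (restated), case `k ≥ 4`. -/
theorem lem_pp13 (k : ℕ) (m : ℤ) (n : ℕ) (hk : 4 ≤ k) (hm : 0 ≤ m)
    (hn : k - 1 ≤ n) :
    {t : PTuple k | PkMem k m n t ∧
        dIdx k t.2.2.2 1 = dIdx k t.2.2.2 (k - 1) ∧ 2 ≤ dIdx k t.2.2.2 1 ∧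
        t.1.part 1 = dIdx k t.2.2.2 1 ∧ t.1.part 2 = dIdx k t.2.2.2 1 ∧
        t.1.part 3 < dIdx k t.2.2.2 1 ∧ t.2.1.parts = []}.ncard =
      {t : PTuple k | PkMem k m (n + 1) t ∧ 3 ≤ dIdx k t.2.2.2 1 ∧
        (∀ j, 2 ≤ j → j ≤ k - 2 → dIdx k t.2.2.2 j = dIdx k t.2.2.2 1 - 1) ∧
        dIdx k t.2.2.2 (k - 1) = dIdx k t.2.2.2 1 - 2 ∧
        (∀ j, 1 ≤ j → j ≤ k - 3 → (gIdx k t.2.2.1 j).parts = []) ∧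
        (gIdx k t.2.2.1 (k - 2)).parts = [1] ∧
        t.1.part 1 = dIdx k t.2.2.2 (k - 1) ∧
        t.1.part 2 = dIdx k t.2.2.2 (k - 1) ∧ t.2.1.parts = []}.ncard := by
  rw [Helper.S_eq k m n hk, Helper.T_eq k m n hk,
    Set.ncard_image_of_injOn (Helper.injOn_Ff k m n hk),
    Set.ncard_image_of_injOn (Helper.injOn_Gg k m n hk)]
end
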